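/- Let h be a nonzero polynomial over ℝ, let k₂ > 0 and k₁² < 3·k₂, and define f(x) = x + k₁·x² + k₂·x³. Then for every polynomial e over ℝ there exists a unique polynomial ẽ over ℝ such that applying f pointwise to the coefficients of h * ẽ reproduces the noiseless measurements n ↦ f((h * e).coeff n), namely ẽ = e. That is, under the cubic observation model with the stated coefficient condition, the full measurement process (convolution with the environment response followed by pointwise observation) admits exact restitution of the event. -/
import Mathlib

theorem cubic_measurement_exact_restitution
    (h : Polynomial ℝ) (hh : h ≠ 0)
    (k₁ k₂ : ℝ) (hk₂ : k₂ > 0) (hk : k₁ ^ 2 < 3 * k₂)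
    (f : ℝ → ℝ) (hf : ∀ x, f x = x + k₁ * x ^ 2 + k₂ * x ^ 3)
    (e : Polynomial ℝ) :
    (∃! e' : Polynomial ℝ,
        (fun n : ℕ => f ((h * e').coeff n)) = (fun n : ℕ => f ((h * e).coeff n))) ∧
      ∀ e' : Polynomial ℝ,
        (fun n : ℕ => f ((h * e').coeff n)) = (fun n : ℕ => f ((h * e).coeff n)) → e' = e := by
  have hinj : ∀ a b : ℝ, f a = f b → a = b := by
    intro a b hab
    rw [hf, hf] at hab
    have hfac : 1 + k₁ * (a + b) + k₂ * (a ^ 2 + a * b + b ^ 2) > 0 := by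
      nlinarith [sq_nonneg (3 * k₂ * (a + b) + 2 * k₁), sq_nonneg (a - b),
        mul_pos hk₂ hk₂, mul_nonneg (le_of_lt hk₂) (sq_nonneg (a - b))]
    have : (a - b) * (1 + k₁ * (a + b) + k₂ * (a ^ 2 + a * b + b ^ 2)) = 0 := by ring_nf; nlinarith [hab]
    rcases mul_eq_zero.1 this with h1 | h2
    · linarith
    · linarith
  have key : ∀ e' : Polynomial ℝ,
      (fun n : ℕ => f ((h * e').coeff n)) = (fun n : ℕ => f ((h * e).coeff n)) → e' = e := by
    intro e' he'
    have hcoef : h * e' = h * e := by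
      ext n
      exact hinj _ _ (congrFun he' n)
    exact mul_left_cancel₀ hh hcoef
  exact ⟨⟨e, rfl, fun e' he' => key e' he'⟩, key⟩
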